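/- arXiv:2103.08292 — 2 statements merged into one kernel-verified Lean document; each statement's English description precedes it below -/
import Mathlib

section
/- (Explicit rank-3 preservation of the BCD/RCD update; Corollary 1 made concrete.) Let n ≥ 2, let R' ∈ ℝ^{3(n−1)×3} be the column-stacking of orthogonal matrices R'₁,…,R'_{n−1} ∈ O(3), let C ∈ ℝ^{3(n−1)×3}, set B = R' R'ᵀ and M = R'ᵀ C ∈ ℝ^{3×3}, and assume M is invertible. Define X* = B C ((Cᵀ B C)^{1/2})^† and U = M (Mᵀ M)^{−1/2}. Then: (a) U is orthogonal (Uᵀ U = I₃); (b) X* = R' U; and (c) the updated matrix Y = [[I₃, X*ᵀ], [X*, B]] ∈ ℝ^{3n×3n} factorizes as Y = Q Qᵀ, where Q ∈ ℝ^{3n×3} is the column-stacking of Q₁ = Uᵀ and Q_{i+1} = R'_i for i = 1,…,n−1, and every block Q_i is orthogonal. -/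
open Matrix

attribute [local instance] Classical.propDecidable

/-- Column-stacking `[A₁ᵀ ⋯ Aₘᵀ]ᵀ ∈ ℝ^{3m×3}` of 3×3 matrices. -/
def stack {m : ℕ} (As : Fin m → Matrix (Fin 3) (Fin 3) ℝ) :
    Matrix (Fin m × Fin 3) (Fin 3) ℝ :=
  fun p b => As p.1 p.2 b

/-- The unique positive semidefinite square root of a positive semidefinite real matrix
(junk value `0` if the matrix is not positive semidefinite). -/
noncomputable def psqrt {ι : Type*} [Fintype ι] [DecidableEq ι]
    (M : Matrix ι ι ℝ) : Matrix ι ι ℝ :=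
  if h : ∃ N : Matrix ι ι ℝ, N.PosSemidef ∧ N * N = M then h.choose else 0

/-- The Moore–Penrose pseudoinverse of a square real matrix, characterized by the four
Penrose conditions (junk value `0` if no such matrix exists). -/
noncomputable def pinv {ι : Type*} [Fintype ι] [DecidableEq ι]
    (M : Matrix ι ι ℝ) : Matrix ι ι ℝ :=
  if h : ∃ N : Matrix ι ι ℝ,
      M * N * M = M ∧ N * M * N = N ∧ (M * N)ᵀ = M * N ∧ (N * M)ᵀ = N * M then
    h.choose
  else 0

/-- Explicit rank-3 preservation of the BCD/RCD update (Corollary 1 made concrete).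
With `R'` the stacking of orthogonal `R'₁,…,R'ₘ` (`m = n − 1 ≥ 1`), `B = R' R'ᵀ`,
`M = R'ᵀ C` invertible, `X* = B C ((Cᵀ B C)^{1/2})^†` and `U = M (Mᵀ M)^{−1/2}`:
(a) `U` is orthogonal; (b) `X* = R' U`; (c) `[[I₃, X*ᵀ],[X*, B]] = Q Qᵀ` where `Q`
stacks `Q₁ = Uᵀ` and `Q_{i+1} = R'_i`, all blocks orthogonal. -/
theorem rcd_update_rank3 {m : ℕ} (hm : 1 ≤ m)
    (Rs' : Fin m → Matrix (Fin 3) (Fin 3) ℝ)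
    (hRs' : ∀ i, (Rs' i)ᵀ * Rs' i = 1)
    (C : Matrix (Fin m × Fin 3) (Fin 3) ℝ)
    (hM : IsUnit ((stack Rs')ᵀ * C).det) :
    letI R' := stack Rs'
    letI B := R' * R'ᵀ
    letI M := R'ᵀ * C
    letI U := M * (psqrt (Mᵀ * M))⁻¹
    letI Xstar := B * C * pinv (psqrt (Cᵀ * B * C))
    Uᵀ * U = 1 ∧
    Xstar = R' * U ∧
    fromBlocks (1 : Matrix (Fin 3) (Fin 3) ℝ) Xstarᵀ Xstar B
      = fromRows Uᵀ R' * (fromRows Uᵀ R')ᵀ ∧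
    (Uᵀ)ᵀ * Uᵀ = 1 ∧ ∀ i, (Rs' i)ᵀ * Rs' i = 1 := by
  set R' := stack Rs' with hR'
  set M := R'ᵀ * C with hMdef
  -- positive semidefiniteness of MᵀM
  have hPSD : (Mᵀ * M).PosSemidef := by
    have := Matrix.posSemidef_conjTranspose_mul_self M
    rwa [Matrix.conjTranspose_eq_transpose_of_trivial] at this
  have hex : ∃ N : Matrix (Fin 3) (Fin 3) ℝ, N.PosSemidef ∧ N * N = Mᵀ * M :=
    by open scoped MatrixOrder in exact ⟨CFC.sqrt (Mᵀ * M), Matrix.nonneg_iff_posSemidef.mp (CFC.sqrt_nonneg _),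
      CFC.sqrt_mul_sqrt_self _ hPSD.nonneg⟩
  have hS : (psqrt (Mᵀ * M)).PosSemidef ∧ psqrt (Mᵀ * M) * psqrt (Mᵀ * M) = Mᵀ * M := by
    unfold psqrt; rw [dif_pos hex]; exact hex.choose_spec
  set S := psqrt (Mᵀ * M) with hSdef
  have hdetS : IsUnit S.det := by
    have h1 : S.det * S.det = M.det * M.det := by
      have := congrArg Matrix.det hS.2
      rwa [Matrix.det_mul, Matrix.det_mul, Matrix.det_transpose] at this
    have : IsUnit (S.det * S.det) := h1 ▸ hM.mul hM
    exact isUnit_of_mul_isUnit_left this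
  have hSsym : Sᵀ = S := by
    have := hS.1.isHermitian
    rwa [Matrix.IsHermitian, Matrix.conjTranspose_eq_transpose_of_trivial] at this
  have hSinv_sym : (S⁻¹)ᵀ = S⁻¹ := by
    rw [Matrix.transpose_nonsing_inv, hSsym]
  have hSS : S * S⁻¹ = 1 := Matrix.mul_nonsing_inv S hdetS
  have hSS' : S⁻¹ * S = 1 := Matrix.nonsing_inv_mul S hdetS
  -- (a)
  have ha : (M * S⁻¹)ᵀ * (M * S⁻¹) = 1 := by
    rw [Matrix.transpose_mul, hSinv_sym]
    calc S⁻¹ * Mᵀ * (M * S⁻¹) = S⁻¹ * (Mᵀ * M) * S⁻¹ := by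
          simp only [Matrix.mul_assoc]
      _ = S⁻¹ * (S * S) * S⁻¹ := by rw [hS.2]
      _ = (S⁻¹ * S) * (S * S⁻¹) := by simp only [Matrix.mul_assoc]
      _ = 1 := by rw [hSS, hSS', Matrix.one_mul]
  -- Cᵀ B C = Mᵀ M
  have hCBC : Cᵀ * (R' * R'ᵀ) * C = Mᵀ * M := by
    rw [hMdef, Matrix.transpose_mul, Matrix.transpose_transpose]
    simp only [Matrix.mul_assoc]
  -- pinv S = S⁻¹
  have hpex : ∃ N : Matrix (Fin 3) (Fin 3) ℝ,
      S * N * S = S ∧ N * S * N = N ∧ (S * N)ᵀ = S * N ∧ (N * S)ᵀ = N * S :=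
    ⟨S⁻¹, by rw [hSS, Matrix.one_mul], by rw [hSS', Matrix.one_mul],
      by rw [hSS, Matrix.transpose_one], by rw [hSS', Matrix.transpose_one]⟩
  have hpinv : pinv S = S⁻¹ := by
    have hch : S * (pinv S) * S = S := by
      unfold pinv; rw [dif_pos hpex]; exact hpex.choose_spec.1
    calc pinv S = (S⁻¹ * S) * pinv S * (S * S⁻¹) := by
          rw [hSS, hSS', Matrix.one_mul, Matrix.mul_one]
      _ = S⁻¹ * (S * pinv S * S) * S⁻¹ := by simp only [Matrix.mul_assoc]
      _ = S⁻¹ * S * S⁻¹ := by rw [hch]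
      _ = S⁻¹ := by rw [hSS', Matrix.one_mul]
  -- (b)
  have hb : R' * R'ᵀ * C * pinv (psqrt (Cᵀ * (R' * R'ᵀ) * C)) = R' * (M * S⁻¹) := by
    rw [hCBC, ← hSdef, hpinv, hMdef]
    simp only [Matrix.mul_assoc]
  refine ⟨ha, hb, ?_, by
    rw [Matrix.transpose_transpose]; exact mul_eq_one_comm.mp ha, hRs'⟩
  rw [Matrix.transpose_fromRows, Matrix.fromRows_mul_fromCols,
    Matrix.transpose_transpose, ha, ← Matrix.transpose_mul, ← hb]
end

section
/- (Monotone decrease of one RCD iteration.) Let n ≥ 2 and let R̃ ∈ ℝ^{3n×3n} be symmetric with all diagonal 3×3 blocks equal to 0₃. Let R ∈ ℝ^{3n×3} be the column-stacking of orthogonal matrices R₁,…,Rₙ ∈ O(3). Take k = 1, let W ∈ ℝ^{3n×3} be the first block column of R̃ (so its first 3×3 block W₁ = 0₃), write R' ∈ ℝ^{3(n−1)×3} for the stacking of R₂,…,Rₙ and C ∈ ℝ^{3(n−1)×3} for the stacking of W₂,…,Wₙ, and assume R'ᵀ C is invertible. Define Z = R (Rᵀ W), S = Z ((Wᵀ Z)^{1/2})^†,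 and let R_new ∈ ℝ^{3n×3} be the block vector with first block I₃ and i-th block S_i for i = 2,…,n. Then −tr(R_newᵀ R̃ R_new) ≤ −tr(Rᵀ R̃ R); i.e., one RCD iteration does not increase the objective of the primal problem. -/
open Matrix

attribute [local instance] Classical.propDecidable

/-- The `(i,j)`-th 3×3 block of a `3n×3n` matrix. -/
def blk {n : ℕ} (A : Matrix (Fin n × Fin 3) (Fin n × Fin 3) ℝ) (i j : Fin n) :
    Matrix (Fin 3) (Fin 3) ℝ :=
  fun a b => A (i, a) (j, b)

open scoped MatrixOrder in
lemma psqrt_spec' {ι : Type*} [Fintype ι] [DecidableEq ι] {M : Matrix ι ι ℝ}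
    (hM : M.PosSemidef) : (psqrt M).PosSemidef ∧ psqrt M * psqrt M = M := by
  have h : ∃ N : Matrix ι ι ℝ, N.PosSemidef ∧ N * N = M :=
    ⟨CFC.sqrt M, (CFC.sqrt_nonneg M).posSemidef, CFC.sqrt_mul_sqrt_self M hM.nonneg⟩
  rw [psqrt, dif_pos h]
  exact h.choose_spec

lemma pinv_eq_inv' {ι : Type*} [Fintype ι] [DecidableEq ι] {M : Matrix ι ι ℝ}
    (hM : IsUnit M.det) : pinv M = M⁻¹ := by
  have h : ∃ N : Matrix ι ι ℝ,
      M * N * M = M ∧ N * M * N = N ∧ (M * N)ᵀ = M * N ∧ (N * M)ᵀ = N * M := by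
    refine ⟨M⁻¹, ?_, ?_, ?_, ?_⟩
    · rw [Matrix.mul_nonsing_inv _ hM, one_mul]
    · rw [Matrix.nonsing_inv_mul _ hM, one_mul]
    · rw [Matrix.mul_nonsing_inv _ hM, transpose_one]
    · rw [Matrix.nonsing_inv_mul _ hM, transpose_one]
  rw [pinv, dif_pos h]
  obtain ⟨h1, -, -, -⟩ := h.choose_spec
  set N := h.choose with hN
  have e1 : M⁻¹ * (M * N * M) * M⁻¹ = N := by
    rw [mul_assoc M N M, Matrix.nonsing_inv_mul_cancel_left _ _ hM,
      Matrix.mul_nonsing_inv_cancel_right _ _ hM]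
  rw [← e1, h1, Matrix.nonsing_inv_mul _ hM, one_mul]

lemma trace_mul_transpose_self_nonneg' {ι : Type*} [Fintype ι]
    (C : Matrix ι ι ℝ) : 0 ≤ (C * Cᵀ).trace := by
  rw [Matrix.trace]
  refine Finset.sum_nonneg fun i _ => ?_
  rw [Matrix.diag_apply, Matrix.mul_apply]
  exact Finset.sum_nonneg fun j _ => by rw [transpose_apply]; exact mul_self_nonneg _

open scoped MatrixOrder in
lemma trace_orth_mul_psd_le' {ι : Type*} [Fintype ι] [DecidableEq ι]
    {P Q : Matrix ι ι ℝ} (hP : P.PosSemidef) (hQ : Q * Qᵀ = 1) :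
    (Q * P).trace ≤ P.trace := by
  obtain ⟨A, hA, hAA⟩ : ∃ A : Matrix ι ι ℝ, A.PosSemidef ∧ A * A = P :=
    ⟨CFC.sqrt P, (CFC.sqrt_nonneg P).posSemidef, CFC.sqrt_mul_sqrt_self P hP.nonneg⟩
  have hAt : Aᵀ = A := by
    have := hA.1
    rwa [Matrix.IsHermitian, conjTranspose_eq_transpose_of_trivial] at this
  have hPt : Pᵀ = P := by
    have := hP.1
    rwa [Matrix.IsHermitian, conjTranspose_eq_transpose_of_trivial] at this
  have e : (A * (1 - Q)) * (A * (1 - Q))ᵀ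
      = A * A - A * Q * A - A * Qᵀ * A + A * (Q * Qᵀ) * A := by
    rw [transpose_mul, transpose_sub, transpose_one, hAt]
    noncomm_ring
  have htr : ((A * (1 - Q)) * (A * (1 - Q))ᵀ).trace
      = 2 * P.trace - 2 * (Q * P).trace := by
    rw [e, hQ, hAA, mul_one]
    have t1 : (A * Q * A).trace = (Q * P).trace := by
      rw [trace_mul_cycle, hAA, trace_mul_comm]
    have t2 : (A * Qᵀ * A).trace = (Q * P).trace := by
      rw [trace_mul_cycle, hAA, ← trace_transpose, transpose_mul, transpose_transpose, hPt]
    simp only [trace_add, trace_sub, t1, t2, hAA]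
    ring
  have := trace_mul_transpose_self_nonneg' (A * (1 - Q))
  rw [htr] at this
  linarith

/-- Monotone decrease of one RCD iteration (with `k = 1`, i.e. reference block `0`):
for symmetric `R̃` with zero diagonal blocks, `R` stacking orthogonal matrices,
`W` the first block column of `R̃`, `R'`/`C` the stackings of the remaining blocks of
`R`/`W` with `R'ᵀ C` invertible, `Z = R (Rᵀ W)`, `S = Z ((Wᵀ Z)^{1/2})^†`, and `R_new`
the block vector with first block `I₃` and remaining blocks those of `S`, we have
`−tr(R_newᵀ R̃ R_new) ≤ −tr(Rᵀ R̃ R)`. -/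
theorem rcd_monotone_decrease {m : ℕ} (hm : 1 ≤ m)
    (Rt : Matrix (Fin (m + 1) × Fin 3) (Fin (m + 1) × Fin 3) ℝ)
    (hsym : Rtᵀ = Rt) (hdiag : ∀ i : Fin (m + 1), blk Rt i i = 0)
    (Rs : Fin (m + 1) → Matrix (Fin 3) (Fin 3) ℝ)
    (hRs : ∀ i, (Rs i)ᵀ * Rs i = 1)
    (hInv : IsUnit (((stack fun i : Fin m => Rs i.succ)ᵀ *
      (show Matrix (Fin m × Fin 3) (Fin 3) ℝ from
        fun p b => Rt (p.1.succ, p.2) (0, b))).det)) :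
    letI R := stack Rs
    letI W : Matrix (Fin (m + 1) × Fin 3) (Fin 3) ℝ := fun p b => Rt p (0, b)
    letI Z := R * (Rᵀ * W)
    letI S := Z * pinv (psqrt (Wᵀ * Z))
    letI Rnew : Matrix (Fin (m + 1) × Fin 3) (Fin 3) ℝ := fun p b => if p.1 = 0 then (1 : Matrix (Fin 3) (Fin 3) ℝ) p.2 b else S p b;
    -(Rnewᵀ * Rt * Rnew).trace ≤ -(Rᵀ * Rt * R).trace := by
  set R := stack Rs with hRd
  set W : Matrix (Fin (m + 1) × Fin 3) (Fin 3) ℝ := (fun p b => Rt p (0, b)) with hWd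
  set Z := R * (Rᵀ * W) with hZd
  set S := Z * pinv (psqrt (Wᵀ * Z)) with hSd
  set Rnew : Matrix (Fin (m + 1) × Fin 3) (Fin 3) ℝ := (fun p b =>
      if p.1 = 0 then (1 : Matrix (Fin 3) (Fin 3) ℝ) p.2 b else S p b) with hRnewd
  -- the "first block column selector" E
  set E : Matrix (Fin (m + 1) × Fin 3) (Fin 3) ℝ :=
    (fun p b => if p = ((0 : Fin (m + 1)), b) then (1 : ℝ) else 0) with hE
  have hmulE : ∀ (A : Matrix (Fin (m + 1) × Fin 3) (Fin (m + 1) × Fin 3) ℝ) p b,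
      (A * E) p b = A p (0, b) := by
    intro A p b
    rw [Matrix.mul_apply]; simp [hE, mul_ite]
  have hEmul : ∀ (A : Matrix (Fin (m + 1) × Fin 3) (Fin 3) ℝ) a b,
      (Eᵀ * A) a b = A (0, a) b := by
    intro A a b
    simp only [Matrix.mul_apply, transpose_apply]; simp [hE, ite_mul]
  have h00 : ∀ a b : Fin 3, Rt ((0 : Fin (m + 1)), a) (0, b) = 0 :=
    fun a b => congrFun (congrFun (hdiag 0) a) b
  have hWE : W = Rt * E := by
    funext p b; rw [hmulE]
  have hWt : Wᵀ = Eᵀ * Rt := by rw [hWE, transpose_mul, hsym]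
  have hEW : Eᵀ * W = 0 := by
    funext a b
    rw [hEmul]
    exact h00 a b
  -- M and its invertibility
  have hMdet : IsUnit (Rᵀ * W).det := by
    have hMeq : Rᵀ * W = (stack fun i : Fin m => Rs i.succ)ᵀ *
        (show Matrix (Fin m × Fin 3) (Fin 3) ℝ from
          fun p b => Rt (p.1.succ, p.2) (0, b)) := by
      funext a b
      rw [Matrix.mul_apply, Matrix.mul_apply]
      simp only [transpose_apply, hRd, hWd, stack]
      rw [Fintype.sum_prod_type, Fintype.sum_prod_type]
      dsimp only
      rw [Fin.sum_univ_succ]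
      have h0 : (∑ c : Fin 3, Rs 0 c a * Rt (0, c) (0, b)) = 0 :=
        Finset.sum_eq_zero fun c _ => by rw [h00 c b, mul_zero]
      rw [h0, zero_add]
    rw [hMeq]; exact hInv
  set M := Rᵀ * W with hMd
  have hMt : Mᵀ = Wᵀ * R := by rw [hMd, transpose_mul, transpose_transpose]
  -- P = psqrt (Mᵀ M)
  have hMtM : (Mᵀ * M).PosSemidef := by
    have := Matrix.posSemidef_conjTranspose_mul_self M
    rwa [conjTranspose_eq_transpose_of_trivial] at this
  obtain ⟨hPpsd, hPP⟩ := psqrt_spec' hMtM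
  set P := psqrt (Mᵀ * M) with hPd
  have hPt : Pᵀ = P := by
    have := hPpsd.1
    rwa [Matrix.IsHermitian, conjTranspose_eq_transpose_of_trivial] at this
  have hPdet : IsUnit P.det := by
    have hsq : P.det * P.det = M.det * M.det := by
      rw [← det_mul, hPP, det_mul, det_transpose]
    rw [isUnit_iff_ne_zero] at hMdet ⊢
    intro h
    exact mul_ne_zero hMdet hMdet (by rw [← hsq, h, mul_zero])
  set U := M * P⁻¹ with hUd
  have hWZ : Wᵀ * Z = Mᵀ * M := by
    rw [hZd, ← Matrix.mul_assoc, ← hMt]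
  have hS : S = R * U := by
    rw [hSd, hWZ, ← hPd, pinv_eq_inv' hPdet, hZd, Matrix.mul_assoc]
  have hUtU : Uᵀ * U = 1 := by
    rw [hUd, transpose_mul, transpose_nonsing_inv, hPt, mul_assoc P⁻¹ Mᵀ,
      ← mul_assoc Mᵀ M, ← hPP, Matrix.mul_nonsing_inv_cancel_right _ _ hPdet,
      Matrix.nonsing_inv_mul _ hPdet]
  have hUUt : U * Uᵀ = 1 := mul_eq_one_comm.mp hUtU
  set K := (1 : Matrix (Fin 3) (Fin 3) ℝ) - Rs 0 * U with hKd
  have hRnewEq : Rnew = R * U + E * K := by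
    funext p b
    obtain ⟨i, a⟩ := p
    simp only [hRnewd, Matrix.add_apply]
    by_cases hp : i = 0
    · subst hp
      rw [if_pos rfl]
      have h1 : (R * U) ((0 : Fin (m + 1)), a) b = (Rs 0 * U) a b := by
        simp [Matrix.mul_apply, hRd, stack]
      have h2 : (E * K) ((0 : Fin (m + 1)), a) b = K a b := by
        rw [Matrix.mul_apply]; simp [hE, Prod.ext_iff, ite_mul]
      rw [h1, h2, hKd]
      simp only [Matrix.sub_apply]
      ring
    · rw [if_neg hp]
      have h2 : (E * K) ((i, a)) b = 0 := by
        rw [Matrix.mul_apply]; simp [hE, Prod.ext_iff, hp]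
      rw [hS, h2, add_zero]
  have hWtRU : Wᵀ * (R * U) = P := by
    rw [← Matrix.mul_assoc, ← hMt, hUd, ← Matrix.mul_assoc, ← hPP,
      Matrix.mul_nonsing_inv_cancel_right _ _ hPdet]
  set Q := Uᵀ * (Rs 0)ᵀ with hQd
  clear_value Q K U P M E Rnew S Z W R
  have hQ : Q * Qᵀ = 1 := by
    rw [hQd, transpose_mul, transpose_transpose, transpose_transpose,
      mul_assoc Uᵀ ((Rs 0)ᵀ), ← mul_assoc ((Rs 0)ᵀ) (Rs 0) U, hRs 0, one_mul, hUtU]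
  have hKt : Kᵀ = 1 - Q := by
    rw [hKd, transpose_sub, transpose_one, transpose_mul, hQd]
  have tGF : ((E * K)ᵀ * Rt * (R * U)).trace = (Kᵀ * P).trace := by
    have h1 : (E * K)ᵀ * Rt * (R * U) = Kᵀ * ((Eᵀ * Rt) * (R * U)) := by
      rw [transpose_mul, Matrix.mul_assoc Kᵀ Eᵀ Rt, Matrix.mul_assoc Kᵀ (Eᵀ * Rt) (R * U)]
    rw [h1, ← hWt, hWtRU]
  have key : (Rnewᵀ * Rt * Rnew).trace
      = (Rᵀ * Rt * R).trace + 2 * (P.trace - (Q * P).trace) := by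
    have expand : Rnewᵀ * Rt * Rnew
        = (R * U)ᵀ * Rt * (R * U) + (R * U)ᵀ * Rt * (E * K)
          + ((E * K)ᵀ * Rt * (R * U) + (E * K)ᵀ * Rt * (E * K)) := by
      rw [hRnewEq, transpose_add, Matrix.add_mul, Matrix.add_mul,
        Matrix.mul_add, Matrix.mul_add]
    have tFF : ((R * U)ᵀ * Rt * (R * U)).trace = (Rᵀ * Rt * R).trace := by
      have h1 : (R * U)ᵀ * Rt * (R * U) = Uᵀ * (Rᵀ * Rt * R) * U := by
        rw [transpose_mul, Matrix.mul_assoc Uᵀ Rᵀ Rt,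
          ← Matrix.mul_assoc (Uᵀ * (Rᵀ * Rt)) R U, Matrix.mul_assoc Uᵀ (Rᵀ * Rt) R]
      rw [h1, trace_mul_cycle, hUUt, one_mul]
    have tGG : ((E * K)ᵀ * Rt * (E * K)).trace = 0 := by
      have h1 : (E * K)ᵀ * Rt * (E * K) = Kᵀ * (Eᵀ * (Rt * E)) * K := by
        rw [transpose_mul, Matrix.mul_assoc Kᵀ Eᵀ Rt,
          ← Matrix.mul_assoc (Kᵀ * (Eᵀ * Rt)) E K, Matrix.mul_assoc Kᵀ (Eᵀ * Rt) E,
          Matrix.mul_assoc Eᵀ Rt E]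
      rw [h1, ← hWE, hEW, mul_zero, zero_mul, trace_zero]
    have tFG : ((R * U)ᵀ * Rt * (E * K)).trace = (Kᵀ * P).trace := by
      have h1 : ((E * K)ᵀ * Rt * (R * U))ᵀ = (R * U)ᵀ * Rt * (E * K) := by
        rw [transpose_mul ((E * K)ᵀ * Rt) (R * U), transpose_mul (E * K)ᵀ Rt,
          transpose_transpose, hsym, ← Matrix.mul_assoc]
      rw [← h1, trace_transpose, tGF]
    have tK : (Kᵀ * P).trace = P.trace - (Q * P).trace := by
      rw [hKt, sub_mul, one_mul, trace_sub]
    rw [expand, trace_add, trace_add, trace_add, tFF, tGG, tFG, tGF, tK]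
    ring
  have hle := trace_orth_mul_psd_le' hPpsd hQ
  linarith [key, hle]
end
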